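/- Let $r, n \in \mathbb{N}$, $\delta \le 1/(2r)$, and let $G$ be a graph on $n$ vertices with $\delta(G) \ge (1-\delta)n$. Let $t < r$ and let $Z \subseteq V(G)$ with $|Z| = t$ induce a complete graph. Then $\bigl|\kappa_Z^{(r)} - k_{r-t} + |\bigcup_{z \in Z} N^c(z)|\, k_{r-t-1}\bigr| \le 6(t\delta r)^2 k_{r-t}$, where $N^c(z) = \{y \in V(G) : zy \notin E(G)\}$ (including $z$ itself). -/

import Mathlib

open Finset

namespace Stmt5Aux

open SimpleGraph

variable {V : Type*} [Fintype V] [DecidableEq V] {G : SimpleGraph V} [DecidableRel G.Adj]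

/-- common neighborhood of a finset of vertices -/
def cnb (G : SimpleGraph V) [DecidableRel G.Adj] (W : Finset V) : Finset V :=
  univ.filter fun v => ∀ z ∈ W, G.Adj z v

lemma mem_cnb {W : Finset V} {v : V} : v ∈ cnb G W ↔ ∀ z ∈ W, G.Adj z v := by
  simp [cnb]

lemma cnb_disj {W : Finset V} {v : V} (hv : v ∈ cnb G W) : v ∉ W := fun hvW =>
  G.irrefl (mem_cnb.1 hv v hvW)

lemma countA (m : ℕ) (W : Finset V) (hW : G.IsClique (W : Set V)) :
    ((G.cliqueFinset (m + W.card)).filter fun K => W ⊆ K).card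
      = ((G.cliqueFinset m).filter fun S => S ⊆ cnb G W).card := by
  apply Finset.card_bij (fun K _ => K \ W)
  · intro K hK
    simp only [mem_filter, mem_cliqueFinset_iff] at hK ⊢
    obtain ⟨hKc, hWK⟩ := hK
    refine ⟨⟨hKc.isClique.subset (by exact_mod_cast (Finset.sdiff_subset : K \ W ⊆ K)), ?_⟩, ?_⟩
    · rw [card_sdiff_of_subset hWK, hKc.card_eq]; omega
    · intro v hv
      rw [mem_sdiff] at hv
      rw [mem_cnb]
      intro z hz
      exact hKc.isClique (hWK hz) hv.1 (fun h => hv.2 (h ▸ hz))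
  · intro K1 h1 K2 h2 heq
    simp only [mem_filter] at h1 h2
    rw [← sdiff_union_of_subset h1.2, ← sdiff_union_of_subset h2.2, heq]
  · intro S hS
    simp only [mem_filter, mem_cliqueFinset_iff] at hS
    obtain ⟨hSc, hScn⟩ := hS
    have hdisj : Disjoint S W := Finset.disjoint_left.2 fun v hv => cnb_disj (hScn hv)
    refine ⟨S ∪ W, ?_, ?_⟩
    · simp only [mem_filter, mem_cliqueFinset_iff]
      refine ⟨⟨?_, ?_⟩, subset_union_right⟩
      · intro a ha b hb hne
        simp only [coe_union, Set.mem_union, mem_coe] at ha hb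
        rcases ha with ha | ha <;> rcases hb with hb | hb
        · exact hSc.isClique (by exact_mod_cast ha) (by exact_mod_cast hb) hne
        · exact ((mem_cnb.1 (hScn ha)) b hb).symm
        · exact (mem_cnb.1 (hScn hb)) a ha
        · exact hW (by exact_mod_cast ha) (by exact_mod_cast hb) hne
      · rw [card_union_of_disjoint hdisj, hSc.card_eq]
    · rw [union_sdiff_right, Finset.sdiff_eq_self_iff_disjoint.2 hdisj]

lemma countUB (m : ℕ) (W : Finset V) :
    ((G.cliqueFinset (m + W.card)).filter fun K => W ⊆ K).card ≤ (G.cliqueFinset m).card := by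
  apply Finset.card_le_card_of_injOn (fun K => K \ W)
  · intro K hK
    simp only [mem_coe, mem_filter, mem_cliqueFinset_iff] at hK ⊢
    obtain ⟨hKc, hWK⟩ := hK
    refine ⟨hKc.isClique.subset (by exact_mod_cast (Finset.sdiff_subset : K \ W ⊆ K)), ?_⟩
    rw [card_sdiff_of_subset hWK, hKc.card_eq]; omega
  · intro K1 h1 K2 h2 heq
    simp only [coe_filter, Set.mem_setOf_eq] at h1 h2
    have heq' : K1 \ W = K2 \ W := heq
    rw [← sdiff_union_of_subset h1.2, ← sdiff_union_of_subset h2.2, heq']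

lemma countC (m : ℕ) (C : Finset V) :
    ((G.cliqueFinset (m+1)).filter fun S => ∃ c ∈ C, c ∈ S).card
      ≤ C.card * (G.cliqueFinset m).card := by
  calc ((G.cliqueFinset (m+1)).filter fun S => ∃ c ∈ C, c ∈ S).card
      ≤ (C.biUnion fun c => (G.cliqueFinset (m+1)).filter fun S => c ∈ S).card := by
        apply card_le_card
        intro S hS
        simp only [mem_filter, mem_biUnion] at hS ⊢
        obtain ⟨h1, c, hc, hcS⟩ := hS
        exact ⟨c, hc, h1, hcS⟩
    _ ≤ ∑ c ∈ C, ((G.cliqueFinset (m+1)).filter fun S => c ∈ S).card := card_biUnion_le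
    _ ≤ ∑ c ∈ C, (G.cliqueFinset m).card := by
        refine sum_le_sum fun c _ => ?_
        have h := countUB (G := G) m {c}
        rw [card_singleton] at h
        refine le_trans (le_of_eq ?_) h
        congr 1
        exact filter_congr fun S _ => by simp [singleton_subset_iff]
    _ = C.card * (G.cliqueFinset m).card := by rw [sum_const, smul_eq_mul]

lemma countOne (P : Finset V) :
    ((G.cliqueFinset 1).filter fun T => T ⊆ P).card = P.card := by
  rw [show ((G.cliqueFinset 1).filter fun T => T ⊆ P) = P.image (fun v => ({v} : Finset V)) by
    ext T
    simp only [mem_filter, mem_cliqueFinset_iff, isNClique_one, mem_image]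
    constructor
    · rintro ⟨⟨v, rfl⟩, h⟩; exact ⟨v, by simpa using h, rfl⟩
    · rintro ⟨v, hv, rfl⟩; exact ⟨⟨v, rfl⟩, by simpa using hv⟩]
  exact card_image_of_injective _ (fun a b h => by simpa using h)

lemma countExt (j : ℕ) (hj : 1 ≤ j) :
    ∑ S ∈ G.cliqueFinset (j-1), (cnb G S).card = j * (G.cliqueFinset j).card := by
  have h1 : ∀ S ∈ G.cliqueFinset (j-1), (cnb G S).card
      = ((G.cliqueFinset j).filter fun K => S ⊆ K).card := by
    intro S hS
    rw [mem_cliqueFinset_iff] at hS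
    have h := countA (G := G) 1 S hS.isClique
    rw [hS.card_eq, show 1 + (j-1) = j by omega] at h
    rw [h, countOne]
  calc ∑ S ∈ G.cliqueFinset (j-1), (cnb G S).card
      = ∑ S ∈ G.cliqueFinset (j-1), ∑ K ∈ G.cliqueFinset j, if S ⊆ K then 1 else 0 := by
        refine sum_congr rfl fun S hS => ?_
        rw [h1 S hS, card_filter]
    _ = ∑ K ∈ G.cliqueFinset j, ∑ S ∈ G.cliqueFinset (j-1), if S ⊆ K then 1 else 0 :=
        Finset.sum_comm
    _ = ∑ K ∈ G.cliqueFinset j, j := by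
        refine sum_congr rfl fun K hK => ?_
        rw [← card_filter]
        rw [mem_cliqueFinset_iff] at hK
        have heq : (G.cliqueFinset (j-1)).filter (fun S => S ⊆ K) = K.powersetCard (j-1) := by
          ext S
          simp only [mem_filter, mem_cliqueFinset_iff, mem_powersetCard]
          constructor
          · rintro ⟨hSc, hSK⟩; exact ⟨hSK, hSc.card_eq⟩
          · rintro ⟨hSK, hcard⟩
            exact ⟨⟨hK.isClique.subset (by exact_mod_cast hSK), hcard⟩, hSK⟩
        rw [heq, card_powersetCard, hK.card_eq, Nat.choose_symm hj, Nat.choose_one_right]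
    _ = j * (G.cliqueFinset j).card := by rw [sum_const, smul_eq_mul, mul_comm]

lemma ncb_le {δ : ℝ} (hmin : (1-δ) * (Fintype.card V : ℝ) ≤ (G.minDegree : ℝ)) (z : V) :
    ((univ.filter fun y => ¬ G.Adj z y).card : ℝ) ≤ δ * (Fintype.card V : ℝ) := by
  have h1 : (univ.filter fun y => ¬ G.Adj z y) = (G.neighborFinset z)ᶜ := by
    ext y; simp [mem_neighborFinset]
  have h2 : G.degree z ≤ Fintype.card V := le_of_lt (G.degree_lt_card_verts z)
  have h3 : (G.minDegree : ℝ) ≤ (G.degree z : ℝ) := by exact_mod_cast G.minDegree_le_degree z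
  rw [h1, card_compl, card_neighborFinset_eq_degree, Nat.cast_sub h2]
  linarith

lemma countGrow {r : ℕ} {δ : ℝ} (hδ0 : 0 ≤ δ) (hδ : δ * (2*(r:ℝ)) ≤ 1)
    (hmin : (1-δ) * (Fintype.card V : ℝ) ≤ (G.minDegree : ℝ))
    (j : ℕ) (hj1 : 1 ≤ j) (hjr : j ≤ r) :
    (Fintype.card V : ℝ) * ((G.cliqueFinset (j-1)).card : ℝ)
      ≤ 2 * (r:ℝ) * ((G.cliqueFinset j).card : ℝ) := by
  have hn0 : (0:ℝ) ≤ (Fintype.card V : ℝ) := Nat.cast_nonneg _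
  have key : ∀ S ∈ G.cliqueFinset (j-1), (Fintype.card V : ℝ) ≤ 2 * ((cnb G S).card : ℝ) := by
    intro S hS
    have hcompl : (cnb G S)ᶜ = S.biUnion (fun z => univ.filter fun y => ¬ G.Adj z y) := by
      ext v
      simp only [mem_compl, mem_cnb, mem_biUnion, mem_filter, mem_univ, true_and, not_forall]
      tauto
    have h1 : ((cnb G S)ᶜ.card : ℝ) ≤ ∑ z ∈ S, ((univ.filter fun y => ¬ G.Adj z y).card : ℝ) := by
      rw [hcompl]
      exact_mod_cast card_biUnion_le
    have h2 : ∑ z ∈ S, ((univ.filter fun y => ¬ G.Adj z y).card : ℝ)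
        ≤ ((j:ℝ)-1) * (δ * (Fintype.card V : ℝ)) := by
      have hcard : S.card = j - 1 := (mem_cliqueFinset_iff.1 hS).card_eq
      calc ∑ z ∈ S, ((univ.filter fun y => ¬ G.Adj z y).card : ℝ)
          ≤ ∑ z ∈ S, δ * (Fintype.card V : ℝ) := sum_le_sum fun z _ => ncb_le hmin z
        _ = ((j-1 : ℕ) : ℝ) * (δ * (Fintype.card V : ℝ)) := by
            rw [sum_const, nsmul_eq_mul, hcard]
        _ ≤ ((j:ℝ)-1) * (δ * (Fintype.card V : ℝ)) := by
            have : ((j-1 : ℕ) : ℝ) ≤ (j:ℝ) - 1 := by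
              rw [Nat.cast_sub hj1]; simp
            exact mul_le_mul_of_nonneg_right this (by positivity)
    have hcc : ((cnb G S)ᶜ.card : ℝ) = (Fintype.card V : ℝ) - ((cnb G S).card : ℝ) := by
      rw [card_compl, Nat.cast_sub (card_le_univ _)]
    have hjb : ((j:ℝ)-1) * (δ * (Fintype.card V : ℝ)) ≤ (Fintype.card V : ℝ)/2 := by
      have hjr' : (j:ℝ) ≤ (r:ℝ) := by exact_mod_cast hjr
      have h4 := mul_le_mul_of_nonneg_right hδ hn0
      have h5 : ((j:ℝ)-1) * (δ * (Fintype.card V : ℝ)) ≤ (r:ℝ) * (δ * (Fintype.card V : ℝ)) := by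
        apply mul_le_mul_of_nonneg_right (by linarith) (by positivity)
      nlinarith
    linarith
  have hsum := countExt (G := G) j hj1
  calc (Fintype.card V : ℝ) * ((G.cliqueFinset (j-1)).card : ℝ)
      = ∑ _S ∈ G.cliqueFinset (j-1), (Fintype.card V : ℝ) := by
        rw [sum_const, nsmul_eq_mul, mul_comm]
    _ ≤ ∑ S ∈ G.cliqueFinset (j-1), 2 * ((cnb G S).card : ℝ) := sum_le_sum key
    _ = 2 * ((∑ S ∈ G.cliqueFinset (j-1), (cnb G S).card : ℕ) : ℝ) := by
        rw [← mul_sum, Nat.cast_sum]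
    _ = 2 * ((j:ℝ) * ((G.cliqueFinset j).card : ℝ)) := by rw [hsum]; push_cast; ring
    _ ≤ 2 * ((r:ℝ) * ((G.cliqueFinset j).card : ℝ)) := by
        have hjr' : (j:ℝ) ≤ (r:ℝ) := by exact_mod_cast hjr
        have := Nat.cast_nonneg (α := ℝ) (G.cliqueFinset j).card
        nlinarith
    _ = 2 * (r:ℝ) * ((G.cliqueFinset j).card : ℝ) := by ring

lemma nat_pt (m : ℕ) (hm : 1 ≤ m) : 2*m ≤ 2 + (m*m - m) := by
  have hmm : m ≤ m*m := Nat.le_mul_of_pos_left m (by omega)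
  rcases Nat.lt_or_ge m 3 with h | h
  · interval_cases m <;> omega
  · have h3 : 3*m ≤ m*m := Nat.mul_le_mul_right m h
    omega

end Stmt5Aux
open Finset Stmt5Aux SimpleGraph


open Stmt5Aux SimpleGraph in
set_option maxHeartbeats 2000000 in
/-- Lemma 4.2(ii): second-order estimate on the number of r-cliques containing
a fixed t-clique Z. -/
theorem stmt_5 {V : Type*} [Fintype V] [DecidableEq V]
    (r t : ℕ) (δ : ℝ) (G : SimpleGraph V) [DecidableRel G.Adj]
    (hδ : δ ≤ 1/(2*(r:ℝ)))
    (hmin : (1-δ) * (Fintype.card V : ℝ) ≤ (G.minDegree : ℝ))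
    (htr : t < r) (Z : Finset V) (hZ : Z.card = t)
    (hZc : G.IsClique (Z : Set V)) :
    |(((G.cliqueFinset r).filter (fun K => Z ⊆ K)).card : ℝ)
        - ((G.cliqueFinset (r-t)).card : ℝ)
        + ((Z.biUnion (fun z => univ.filter (fun y => ¬ G.Adj z y))).card : ℝ)
          * ((G.cliqueFinset (r-t-1)).card : ℝ)|
      ≤ 6*((t:ℝ)*δ*(r:ℝ))^2 * ((G.cliqueFinset (r-t)).card : ℝ) := by
  classical
  rcases Nat.eq_zero_or_pos t with ht0 | ht1
  · subst ht0
    have hZe : Z = ∅ := card_eq_zero.1 hZ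
    subst hZe
    rw [filter_true_of_mem (fun K _ => empty_subset K)]
    simp
  -- t ≥ 1 from now on
  have hr1 : 1 ≤ r := by omega
  have hZne : Z.Nonempty := card_pos.1 (by omega)
  have hVne : Nonempty V := ⟨hZne.choose⟩
  have hn1 : 1 ≤ Fintype.card V := Fintype.card_pos
  have hn0 : (0:ℝ) ≤ (Fintype.card V : ℝ) := Nat.cast_nonneg _
  have hn1' : (1:ℝ) ≤ (Fintype.card V : ℝ) := by exact_mod_cast hn1
  have hδ0 : 0 ≤ δ := by
    by_contra hcon
    push_neg at hcon
    obtain ⟨z⟩ := hVne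
    have h1 : (G.minDegree : ℝ) ≤ (G.degree z : ℝ) := by exact_mod_cast G.minDegree_le_degree z
    have h2 : (G.degree z : ℝ) < (Fintype.card V : ℝ) := by
      exact_mod_cast G.degree_lt_card_verts z
    nlinarith
  have hr0 : (0:ℝ) < 2*(r:ℝ) := by
    have : (1:ℝ) ≤ (r:ℝ) := by exact_mod_cast hr1
    linarith
  have hδ2 : δ * (2*(r:ℝ)) ≤ 1 := by
    rw [le_div_iff₀ hr0] at hδ
    linarith
  set s := r - t with hsdef
  have hs1 : 1 ≤ s := by omega
  have hsr : s ≤ r := by omega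
  have hnc : ∀ z : V, ((univ.filter fun y => ¬ G.Adj z y).card : ℝ)
      ≤ δ * (Fintype.card V : ℝ) := fun z => ncb_le hmin z
  set B := Z.biUnion fun z => univ.filter fun y => ¬ G.Adj z y with hBdef
  have hcnB : cnb G Z = Bᶜ := by
    ext v
    simp only [mem_cnb, hBdef, mem_compl, mem_biUnion, mem_filter, mem_univ, true_and,
      not_exists, not_and, not_not]
  have ha : ((G.cliqueFinset r).filter fun K => Z ⊆ K).card
      = ((G.cliqueFinset s).filter fun S => S ⊆ cnb G Z).card := by
    have h := countA (G := G) s Z hZc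
    rwa [hZ, show s + t = r by omega] at h
  have hBcard : (B.card : ℝ) ≤ (t:ℝ) * δ * (Fintype.card V : ℝ) := by
    have h1 : B.card ≤ ∑ z ∈ Z, (univ.filter fun y => ¬ G.Adj z y).card := card_biUnion_le
    calc (B.card : ℝ) ≤ ((∑ z ∈ Z, (univ.filter fun y => ¬ G.Adj z y).card : ℕ) : ℝ) := by
          exact_mod_cast h1
      _ = ∑ z ∈ Z, ((univ.filter fun y => ¬ G.Adj z y).card : ℝ) := Nat.cast_sum _ _
      _ ≤ ∑ _z ∈ Z, δ * (Fintype.card V : ℝ) := sum_le_sum fun z _ => hnc z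
      _ = (t:ℝ) * δ * (Fintype.card V : ℝ) := by
          rw [sum_const, nsmul_eq_mul, hZ]; ring
  have hBn : B.card ≤ Fintype.card V := by
    calc B.card ≤ (univ : Finset V).card := card_le_card (subset_univ B)
      _ = Fintype.card V := card_univ
  rcases eq_or_lt_of_le hs1 with hs1' | hs2
  · -- case s = 1
    have hc1 : (G.cliqueFinset s).card = Fintype.card V := by
      rw [← hs1']
      have h := countOne (G := G) (univ : Finset V)
      rwa [filter_true_of_mem (fun T _ => subset_univ T), card_univ] at h
    have hc2 : (G.cliqueFinset (s-1)).card = 1 := by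
      rw [← hs1']
      have h0 : G.cliqueFinset 0 = ({∅} : Finset (Finset V)) := by
        ext S
        simp only [mem_cliqueFinset_iff, mem_singleton, isNClique_iff, card_eq_zero]
        constructor
        · exact fun h => h.2
        · rintro rfl; exact ⟨by simp, rfl⟩
      rw [show (1:ℕ) - 1 = 0 from rfl, h0, card_singleton]
    have ha2 : ((G.cliqueFinset r).filter fun K => Z ⊆ K).card = Fintype.card V - B.card := by
      rw [ha, hcnB, ← hs1', countOne, card_compl]
    rw [ha2, hc1, hc2, Nat.cast_sub hBn]
    have : ((Fintype.card V : ℝ) - (B.card:ℝ)) - (Fintype.card V : ℝ) + (B.card:ℝ) * (1:ℕ) = 0 := by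
      push_cast; ring
    rw [this, abs_zero]
    positivity
  · -- case s ≥ 2
    have hs2' : 2 ≤ s := hs2
    have hsplit := card_filter_add_card_filter_not
      (s := G.cliqueFinset s) (p := fun S => ∃ c ∈ B, c ∈ S)
    have hafilter : ((G.cliqueFinset s).filter fun S => S ⊆ cnb G Z)
        = (G.cliqueFinset s).filter fun S => ¬ ∃ c ∈ B, c ∈ S := by
      refine filter_congr fun S _ => ?_
      rw [hcnB]
      constructor
      · rintro h ⟨c, hcB, hcS⟩
        exact (mem_compl.1 (h hcS)) hcB
      · intro h v hv
        exact mem_compl.2 fun hvB => h ⟨v, hvB, hv⟩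
    have key1 : ((G.cliqueFinset r).filter fun K => Z ⊆ K).card
        + ((G.cliqueFinset s).filter fun S => ∃ c ∈ B, c ∈ S).card
        = (G.cliqueFinset s).card := by
      rw [ha, hafilter]
      omega
    have hNle : ((G.cliqueFinset s).filter fun S => ∃ c ∈ B, c ∈ S).card
        ≤ B.card * (G.cliqueFinset (s-1)).card := by
      have h := countC (G := G) (s-1) B
      rwa [show s - 1 + 1 = s by omega] at h
    have hlow : ∀ b : V, (G.cliqueFinset (s-1)).card
        ≤ ((G.cliqueFinset s).filter fun S => b ∈ S).card
          + (univ.filter fun y => ¬ G.Adj b y).card * (G.cliqueFinset (s-2)).card := by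
      intro b
      have hk : ((G.cliqueFinset s).filter fun S => b ∈ S).card
          = ((G.cliqueFinset (s-1)).filter fun T => T ⊆ cnb G {b}).card := by
        have h := countA (G := G) (s-1) {b} (by simp)
        rw [card_singleton, show s - 1 + 1 = s by omega] at h
        rw [← h]
        congr 1
        exact filter_congr fun S _ => by simp [singleton_subset_iff]
      have hsp := card_filter_add_card_filter_not
        (s := G.cliqueFinset (s-1)) (p := fun T => T ⊆ cnb G {b})
      have hbd : ((G.cliqueFinset (s-1)).filter fun T => ¬ T ⊆ cnb G {b}).card
          ≤ (univ.filter fun y => ¬ G.Adj b y).card * (G.cliqueFinset (s-2)).card := by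
        have h := countC (G := G) (s-2) (univ.filter fun y => ¬ G.Adj b y)
        rw [show s - 2 + 1 = s - 1 by omega] at h
        refine le_trans (card_le_card ?_) h
        intro T hT
        simp only [mem_filter] at hT ⊢
        refine ⟨hT.1, ?_⟩
        obtain ⟨v, hv, hvn⟩ := not_subset.1 hT.2
        refine ⟨v, ?_, hv⟩
        simp only [mem_filter, mem_univ, true_and]
        intro hadj
        exact hvn (mem_cnb.2 (by simpa using hadj))
      rw [← hsp, hk]
      exact Nat.add_le_add_left hbd _
    have hD1 : ∑ b ∈ B, ((G.cliqueFinset s).filter fun S => b ∈ S).card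
        = ∑ S ∈ G.cliqueFinset s, (S ∩ B).card := by
      calc ∑ b ∈ B, ((G.cliqueFinset s).filter fun S => b ∈ S).card
          = ∑ b ∈ B, ∑ S ∈ G.cliqueFinset s, if b ∈ S then 1 else 0 :=
            sum_congr rfl fun b _ => card_filter _ _
        _ = ∑ S ∈ G.cliqueFinset s, ∑ b ∈ B, if b ∈ S then 1 else 0 := Finset.sum_comm
        _ = ∑ S ∈ G.cliqueFinset s, (S ∩ B).card := by
            refine sum_congr rfl fun S _ => ?_
            rw [← card_filter, filter_mem_eq_inter, inter_comm]
    have hpt : ∀ S ∈ G.cliqueFinset s, 2 * (S ∩ B).card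
        ≤ 2 * (if ∃ c ∈ B, c ∈ S then 1 else 0) + (S ∩ B).offDiag.card := by
      intro S _
      rw [Finset.offDiag_card]
      by_cases hm : ∃ c ∈ B, c ∈ S
      · rw [if_pos hm]
        obtain ⟨c, hcB, hcS⟩ := hm
        have h1 : 1 ≤ (S ∩ B).card := card_pos.2 ⟨c, mem_inter.2 ⟨hcS, hcB⟩⟩
        exact nat_pt _ h1
      · rw [if_neg hm]
        have hemp : S ∩ B = ∅ := by
          rw [eq_empty_iff_forall_notMem]
          intro c hc
          rw [mem_inter] at hc
          exact hm ⟨c, hc.2, hc.1⟩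
        rw [hemp]
        simp
    have hD2 : ∑ S ∈ G.cliqueFinset s, (S ∩ B).offDiag.card
        ≤ B.card * B.card * (G.cliqueFinset (s-2)).card := by
      have heq : ∀ S ∈ G.cliqueFinset s,
          (S ∩ B).offDiag = B.offDiag.filter fun p => p.1 ∈ S ∧ p.2 ∈ S := by
        intro S _
        ext p
        simp only [Finset.mem_offDiag, mem_filter, mem_inter]
        tauto
      calc ∑ S ∈ G.cliqueFinset s, (S ∩ B).offDiag.card
          = ∑ S ∈ G.cliqueFinset s, ∑ p ∈ B.offDiag, if p.1 ∈ S ∧ p.2 ∈ S then 1 else 0 := by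
            refine sum_congr rfl fun S hS => ?_
            rw [heq S hS, card_filter]
        _ = ∑ p ∈ B.offDiag, ∑ S ∈ G.cliqueFinset s, if p.1 ∈ S ∧ p.2 ∈ S then 1 else 0 :=
            Finset.sum_comm
        _ = ∑ p ∈ B.offDiag, ((G.cliqueFinset s).filter fun S => p.1 ∈ S ∧ p.2 ∈ S).card :=
            sum_congr rfl fun p _ => (card_filter _ _).symm
        _ ≤ ∑ _p ∈ B.offDiag, (G.cliqueFinset (s-2)).card := by
            refine sum_le_sum fun p hp => ?_
            have hne : p.1 ≠ p.2 := (Finset.mem_offDiag.1 hp).2.2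
            have h := countUB (G := G) (s-2) {p.1, p.2}
            rw [card_pair hne, show s - 2 + 2 = s by omega] at h
            refine le_trans (le_of_eq ?_) h
            congr 1
            refine (filter_congr fun S _ => ?_).symm
            simp [insert_subset_iff]
        _ = B.offDiag.card * (G.cliqueFinset (s-2)).card := by rw [sum_const, smul_eq_mul]
        _ ≤ B.card * B.card * (G.cliqueFinset (s-2)).card := by
            have h1 := Finset.offDiag_card B
            have h2 : B.offDiag.card ≤ B.card * B.card := by omega
            exact Nat.mul_le_mul_right _ h2
    have hB2 : 2 * (∑ b ∈ B, ((G.cliqueFinset s).filter fun S => b ∈ S).card)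
        ≤ 2 * ((G.cliqueFinset s).filter fun S => ∃ c ∈ B, c ∈ S).card
          + B.card * B.card * (G.cliqueFinset (s-2)).card := by
      calc 2 * (∑ b ∈ B, ((G.cliqueFinset s).filter fun S => b ∈ S).card)
          = ∑ S ∈ G.cliqueFinset s, 2 * (S ∩ B).card := by rw [hD1, mul_sum]
        _ ≤ ∑ S ∈ G.cliqueFinset s,
              (2 * (if ∃ c ∈ B, c ∈ S then 1 else 0) + (S ∩ B).offDiag.card) :=
            sum_le_sum hpt
        _ = 2 * ((G.cliqueFinset s).filter fun S => ∃ c ∈ B, c ∈ S).card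
              + ∑ S ∈ G.cliqueFinset s, (S ∩ B).offDiag.card := by
            rw [sum_add_distrib, ← mul_sum, ← card_filter]
        _ ≤ _ := Nat.add_le_add_left hD2 _
    have hF : B.card * (G.cliqueFinset (s-1)).card
        ≤ (∑ b ∈ B, ((G.cliqueFinset s).filter fun S => b ∈ S).card)
          + ∑ b ∈ B, (univ.filter fun y => ¬ G.Adj b y).card * (G.cliqueFinset (s-2)).card := by
      calc B.card * (G.cliqueFinset (s-1)).card
          = ∑ _b ∈ B, (G.cliqueFinset (s-1)).card := by rw [sum_const, smul_eq_mul]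
        _ ≤ ∑ b ∈ B, (((G.cliqueFinset s).filter fun S => b ∈ S).card
              + (univ.filter fun y => ¬ G.Adj b y).card * (G.cliqueFinset (s-2)).card) :=
            sum_le_sum fun b _ => hlow b
        _ = _ := sum_add_distrib
    -- move to the reals
    have hc1nn : (0:ℝ) ≤ ((G.cliqueFinset s).card : ℝ) := Nat.cast_nonneg _
    have hc2nn : (0:ℝ) ≤ ((G.cliqueFinset (s-1)).card : ℝ) := Nat.cast_nonneg _
    have hc3nn : (0:ℝ) ≤ ((G.cliqueFinset (s-2)).card : ℝ) := Nat.cast_nonneg _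
    have hbnn : (0:ℝ) ≤ (B.card : ℝ) := Nat.cast_nonneg _
    have hFR := (Nat.cast_le (α := ℝ)).2 hF
    push_cast at hFR
    have hB2R := (Nat.cast_le (α := ℝ)).2 hB2
    push_cast at hB2R
    have hNleR := (Nat.cast_le (α := ℝ)).2 hNle
    push_cast at hNleR
    have key1R : (((G.cliqueFinset r).filter fun K => Z ⊆ K).card : ℝ)
        + (((G.cliqueFinset s).filter fun S => ∃ c ∈ B, c ∈ S).card : ℝ)
        = ((G.cliqueFinset s).card : ℝ) := by exact_mod_cast key1
    have hSnc : (∑ b ∈ B, ((univ.filter fun y => ¬ G.Adj b y).card : ℝ)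
          * ((G.cliqueFinset (s-2)).card : ℝ))
        ≤ (B.card : ℝ) * (δ * (Fintype.card V : ℝ)) * ((G.cliqueFinset (s-2)).card : ℝ) := by
      calc (∑ b ∈ B, ((univ.filter fun y => ¬ G.Adj b y).card : ℝ)
              * ((G.cliqueFinset (s-2)).card : ℝ))
          ≤ ∑ _b ∈ B, δ * (Fintype.card V : ℝ) * ((G.cliqueFinset (s-2)).card : ℝ) :=
            sum_le_sum fun b _ => mul_le_mul_of_nonneg_right (hnc b) hc3nn
        _ = (B.card : ℝ) * (δ * (Fintype.card V : ℝ)) * ((G.cliqueFinset (s-2)).card : ℝ) := by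
            rw [sum_const, nsmul_eq_mul]; ring
    have ht1R : (1:ℝ) ≤ (t:ℝ) := by exact_mod_cast ht1
    have hMnn : (0:ℝ) ≤ (t:ℝ) * δ * (Fintype.card V : ℝ) := by positivity
    have hy : δ * (Fintype.card V : ℝ) ≤ (t:ℝ) * δ * (Fintype.card V : ℝ) := by
      nlinarith [mul_nonneg hδ0 hn0]
    have e1 : (B.card : ℝ) * (δ * (Fintype.card V : ℝ))
        ≤ ((t:ℝ) * δ * (Fintype.card V : ℝ)) * ((t:ℝ) * δ * (Fintype.card V : ℝ)) :=
      mul_le_mul hBcard hy (by positivity) hMnn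
    have e2 : (B.card : ℝ) * (B.card : ℝ)
        ≤ ((t:ℝ) * δ * (Fintype.card V : ℝ)) * ((t:ℝ) * δ * (Fintype.card V : ℝ)) :=
      mul_le_mul hBcard hBcard hbnn hMnn
    have e1' := mul_le_mul_of_nonneg_right e1 hc3nn
    have e2' := mul_le_mul_of_nonneg_right e2 hc3nn
    have g5 : (Fintype.card V : ℝ) * ((G.cliqueFinset (s-2)).card : ℝ)
        ≤ 2 * (r:ℝ) * ((G.cliqueFinset (s-1)).card : ℝ) := by
      have h := countGrow (G := G) hδ0 hδ2 hmin (s-1) (by omega) (by omega)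
      rwa [show s - 1 - 1 = s - 2 by omega] at h
    have g6 : (Fintype.card V : ℝ) * ((G.cliqueFinset (s-1)).card : ℝ)
        ≤ 2 * (r:ℝ) * ((G.cliqueFinset s).card : ℝ) :=
      countGrow (G := G) hδ0 hδ2 hmin s hs1 hsr
    have g7 : (Fintype.card V : ℝ) * ((Fintype.card V : ℝ) * ((G.cliqueFinset (s-2)).card : ℝ))
        ≤ (2 * (r:ℝ)) * ((2 * (r:ℝ)) * ((G.cliqueFinset s).card : ℝ)) := by
      calc (Fintype.card V : ℝ) * ((Fintype.card V : ℝ) * ((G.cliqueFinset (s-2)).card : ℝ))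
          ≤ (Fintype.card V : ℝ) * (2 * (r:ℝ) * ((G.cliqueFinset (s-1)).card : ℝ)) :=
            mul_le_mul_of_nonneg_left g5 hn0
        _ = (2 * (r:ℝ)) * ((Fintype.card V : ℝ) * ((G.cliqueFinset (s-1)).card : ℝ)) := by ring
        _ ≤ (2 * (r:ℝ)) * (2 * (r:ℝ) * ((G.cliqueFinset s).card : ℝ)) :=
            mul_le_mul_of_nonneg_left g6 (by positivity)
    have g8 : ((t:ℝ) * δ)^2
          * ((Fintype.card V : ℝ) * ((Fintype.card V : ℝ) * ((G.cliqueFinset (s-2)).card : ℝ)))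
        ≤ ((t:ℝ) * δ)^2 * ((2 * (r:ℝ)) * ((2 * (r:ℝ)) * ((G.cliqueFinset s).card : ℝ))) :=
      mul_le_mul_of_nonneg_left g7 (by positivity)
    have hRnn : (0:ℝ) ≤ 6*((t:ℝ)*δ*(r:ℝ))^2 * ((G.cliqueFinset s).card : ℝ) := by positivity
    rw [abs_le]
    constructor
    · linarith [hNleR, key1R, hRnn]
    · linarith [hFR, hB2R, hSnc, e1', e2', g8, key1R]
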